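/- For any permutation σ of order k and n ≥ k, the cover matrix and the fuzzy permutation matrix differ by a constant matrix: A_σ^{↑n} = ((n−1)!/(k−1)!)·(1/k − 1/n)·J_n + F_σ^{↑n}, where J_n is the n×n all-ones matrix. -/

import Mathlib

/-- A subset `s` of `[n]` is a copy of the pattern `σ` in `π`. -/
def IsCopy {k n : ℕ} (σ : Equiv.Perm (Fin k)) (π : Equiv.Perm (Fin n))
    (s : Finset (Fin n)) : Prop :=
  ∃ h : s.card = k, ∀ i j : Fin k,
    π (s.orderIsoOfFin h i).1 < π (s.orderIsoOfFin h j).1 ↔ σ i < σ j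

/-- The number of copies of `σ` in `π`. -/
noncomputable def numCopies {k n : ℕ} (σ : Equiv.Perm (Fin k)) (π : Equiv.Perm (Fin n)) : ℕ := by
  classical exact (Finset.univ.filter (IsCopy σ π)).card

/-- The pattern density of `σ` in `π`. -/
noncomputable def density {k n : ℕ} (σ : Equiv.Perm (Fin k)) (π : Equiv.Perm (Fin n)) : ℝ :=
  (numCopies σ π : ℝ) / (n.choose k : ℝ)



open scoped Classical
open Finset

section Aux
variable {n k : ℕ}


lemma mem_iff_exists_orderEmb (s : Finset (Fin n)) (h : s.card = k) (a : Fin n) :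
    a ∈ s ↔ ∃ i : Fin k, s.orderEmbOfFin h i = a := by
  constructor
  · intro ha
    have := s.range_orderEmbOfFin h
    have : a ∈ Set.range (s.orderEmbOfFin h) := by rw [this]; exact ha
    exact this
  · rintro ⟨i, rfl⟩; exact s.orderEmbOfFin_mem h i

lemma card_filter_lt_orderEmb (s : Finset (Fin n)) (h : s.card = k) (j : Fin k) :
    (s.filter (fun a => a < s.orderEmbOfFin h j)).card = j := by
  have himg : s.filter (fun a => a < s.orderEmbOfFin h j)
      = (Finset.Iio j).image (fun i => s.orderEmbOfFin h i) := by
    ext a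
    simp only [mem_filter, mem_image, mem_Iio]
    constructor
    · rintro ⟨ha, hlt⟩
      obtain ⟨i, rfl⟩ := (mem_iff_exists_orderEmb s h a).1 ha
      exact ⟨i, (s.orderEmbOfFin h).lt_iff_lt.1 hlt, rfl⟩
    · rintro ⟨i, hij, rfl⟩
      exact ⟨s.orderEmbOfFin_mem h i, (s.orderEmbOfFin h).lt_iff_lt.2 hij⟩
  rw [himg, Finset.card_image_of_injective _ (s.orderEmbOfFin h).injective, Fin.card_Iio]

lemma orderEmb_eq_iff (s : Finset (Fin n)) (h : s.card = k) (y : Fin n) (j : Fin k) :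
    s.orderEmbOfFin h j = y ↔ y ∈ s ∧ (s.filter (fun a => a < y)).card = j := by
  constructor
  · rintro rfl
    exact ⟨s.orderEmbOfFin_mem h j, card_filter_lt_orderEmb s h j⟩
  · rintro ⟨hy, hc⟩
    obtain ⟨i, rfl⟩ := (mem_iff_exists_orderEmb s h y).1 hy
    congr 1
    have := card_filter_lt_orderEmb s h i
    exact Fin.ext (by omega)


lemma filter_insert_union_lt (y : Fin n) (A B : Finset (Fin n)) (hA : A ⊆ Finset.Iio y)
    (hB : B ⊆ Finset.Ioi y) :
    (insert y (A ∪ B)).filter (fun a => a < y) = A := by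
  ext a
  simp only [mem_filter, mem_insert, mem_union]
  constructor
  · rintro ⟨rfl | ha | ha, hlt⟩
    · exact absurd hlt (lt_irrefl _)
    · exact ha
    · exact absurd (lt_trans (mem_Ioi.1 (hB ha)) hlt) (lt_irrefl _)
  · intro ha; exact ⟨Or.inr (Or.inl ha), mem_Iio.1 (hA ha)⟩

lemma filter_insert_union_gt (y : Fin n) (A B : Finset (Fin n)) (hA : A ⊆ Finset.Iio y)
    (hB : B ⊆ Finset.Ioi y) :
    (insert y (A ∪ B)).filter (fun a => y < a) = B := by
  ext a
  simp only [mem_filter, mem_insert, mem_union]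
  constructor
  · rintro ⟨rfl | ha | ha, hlt⟩
    · exact absurd hlt (lt_irrefl _)
    · exact absurd (lt_trans (mem_Iio.1 (hA ha)) hlt) (lt_irrefl _)
    · exact ha
  · intro ha; exact ⟨Or.inr (Or.inr ha), mem_Ioi.1 (hB ha)⟩

lemma card_insert_union_split (y : Fin n) (A B : Finset (Fin n)) (hA : A ⊆ Finset.Iio y)
    (hB : B ⊆ Finset.Ioi y) :
    (insert y (A ∪ B)).card = A.card + B.card + 1 := by
  have hynotin : y ∉ A ∪ B := by
    simp only [mem_union]
    rintro (h | h)
    · exact absurd (mem_Iio.1 (hA h)) (lt_irrefl _)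
    · exact absurd (mem_Ioi.1 (hB h)) (lt_irrefl _)
  have hdisj : Disjoint A B := by
    rw [Finset.disjoint_left]
    intro a ha hb
    exact absurd (lt_trans (mem_Iio.1 (hA ha)) (mem_Ioi.1 (hB hb))) (lt_irrefl _)
  rw [Finset.card_insert_of_notMem hynotin, Finset.card_union_of_disjoint hdisj]

lemma part_eq (y : Fin n) (V : Finset (Fin n)) (hyV : y ∈ V) :
    V = insert y ((V.filter (fun a => a < y)) ∪ (V.filter (fun a => y < a))) := by
  ext a
  simp only [mem_insert, mem_union, mem_filter]
  constructor
  · intro ha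
    rcases lt_trichotomy a y with h' | h' | h'
    · exact Or.inr (Or.inl ⟨ha, h'⟩)
    · exact Or.inl h'
    · exact Or.inr (Or.inr ⟨ha, h'⟩)
  · rintro (rfl | ⟨ha, -⟩ | ⟨ha, -⟩) <;> [exact hyV; exact ha; exact ha]

lemma card_subsets_index (y : Fin n) (j : ℕ) (hj : j < k) :
    ((Finset.powersetCard k (Finset.univ : Finset (Fin n))).filter
        (fun V => y ∈ V ∧ (V.filter (fun a => a < y)).card = j)).card
      = y.val.choose j * (n - 1 - y.val).choose (k - 1 - j) := by
  rw [show y.val.choose j * (n - 1 - y.val).choose (k - 1 - j)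
      = (((Finset.Iio y).powersetCard j) ×ˢ ((Finset.Ioi y).powersetCard (k - 1 - j))).card by
    rw [Finset.card_product, Finset.card_powersetCard, Finset.card_powersetCard,
      Fin.card_Iio, Fin.card_Ioi]]
  apply Finset.card_nbij' (fun V => (V.filter (fun a => a < y), V.filter (fun a => y < a)))
    (fun p => insert y (p.1 ∪ p.2))
  · intro V hV
    simp only [Finset.mem_coe, mem_filter, mem_powersetCard] at hV
    obtain ⟨⟨-, hcard⟩, hyV, hcj⟩ := hV
    have hA : V.filter (fun a => a < y) ⊆ Finset.Iio y :=
      fun a ha => mem_Iio.2 (mem_filter.1 ha).2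
    have hB : V.filter (fun a => y < a) ⊆ Finset.Ioi y :=
      fun a ha => mem_Ioi.2 (mem_filter.1 ha).2
    have hcV : (V.filter (fun a => y < a)).card = k - 1 - j := by
      have := card_insert_union_split y _ _ hA hB
      rw [← part_eq y V hyV] at this
      omega
    exact Finset.mem_product.2 ⟨mem_powersetCard.2 ⟨hA, hcj⟩, mem_powersetCard.2 ⟨hB, hcV⟩⟩
  · intro p hp
    obtain ⟨hp1, hp2⟩ := Finset.mem_product.1 hp
    obtain ⟨hA, hAc⟩ := mem_powersetCard.1 hp1
    obtain ⟨hB, hBc⟩ := mem_powersetCard.1 hp2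
    refine mem_filter.2 ⟨mem_powersetCard.2 ⟨Finset.subset_univ _, ?_⟩, Finset.mem_insert_self _ _, ?_⟩
    · rw [card_insert_union_split y _ _ hA hB, hAc, hBc]; omega
    · rw [filter_insert_union_lt y _ _ hA hB, hAc]
  · intro V hV
    simp only [Finset.mem_coe, mem_filter, mem_powersetCard] at hV
    exact (part_eq y V hV.2.1).symm
  · intro p hp
    obtain ⟨hp1, hp2⟩ := Finset.mem_product.1 hp
    obtain ⟨hA, -⟩ := mem_powersetCard.1 hp1
    obtain ⟨hB, -⟩ := mem_powersetCard.1 hp2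
    exact Prod.ext (filter_insert_union_lt y _ _ hA hB) (filter_insert_union_gt y _ _ hA hB)


noncomputable def permExtendEquiv (t : Finset (Fin n)) (f : Fin n → Fin n)
    (hf : Set.InjOn f t) :
    {π : Equiv.Perm (Fin n) // ∀ a ∈ t, π a = f a} ≃
      (↥(tᶜ) ≃ ↥((t.image f)ᶜ)) := by
  classical
  have hcards : Fintype.card ↥(tᶜ) = Fintype.card ↥((t.image f)ᶜ) := by
    simp only [Fintype.card_coe, Finset.card_compl, Fintype.card_fin,
      Finset.card_image_of_injOn hf]
  refine
    { toFun := fun π => Equiv.ofBijective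
        (fun a => ⟨π.1 a.1, ?_⟩) ?_
      invFun := fun e => ⟨Equiv.ofBijective
        (fun a => if h : a ∈ t then f a else (e ⟨a, by simpa using h⟩).1) ?_, ?_⟩
      left_inv := ?_
      right_inv := ?_ }
  · -- π a ∈ (t.image f)ᶜ
    rcases a with ⟨a, ha⟩
    rw [Finset.mem_compl] at ha ⊢
    intro hmem
    obtain ⟨c, hc, hfc⟩ := Finset.mem_image.1 hmem
    have : π.1 c = π.1 a := by rw [π.2 c hc, hfc]
    exact ha (π.1.injective this ▸ hc)
  · -- bijectivity of forward map
    rw [Fintype.bijective_iff_injective_and_card]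
    refine ⟨fun a b hab => Subtype.ext (π.1.injective (congrArg Subtype.val hab)), hcards⟩
  · -- injectivity of glued map
    have hinj : Function.Injective
        (fun a => if h : a ∈ t then f a else (e ⟨a, by simpa using h⟩).1 : Fin n → Fin n) := by
      intro a b hab
      dsimp only at hab
      by_cases ha : a ∈ t <;> by_cases hb : b ∈ t
      · rw [dif_pos ha, dif_pos hb] at hab; exact hf ha hb hab
      · rw [dif_pos ha, dif_neg hb] at hab
        exfalso
        have h1 : f a ∈ t.image f := Finset.mem_image_of_mem f ha
        have h2 := (e ⟨b, by simpa using hb⟩).2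
        rw [Finset.mem_compl] at h2
        exact h2 (hab ▸ h1)
      · rw [dif_neg ha, dif_pos hb] at hab
        exfalso
        have h1 : f b ∈ t.image f := Finset.mem_image_of_mem f hb
        have h2 := (e ⟨a, by simpa using ha⟩).2
        rw [Finset.mem_compl] at h2
        exact h2 (hab ▸ h1)
      · rw [dif_neg ha, dif_neg hb] at hab
        have := e.injective (Subtype.ext hab)
        simpa using congrArg Subtype.val this
    exact Finite.injective_iff_bijective.1 hinj
  · -- extension property
    intro a ha
    simp only [Equiv.ofBijective_apply, dif_pos ha]
  · -- left inverse
    rintro ⟨π, hπ⟩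
    apply Subtype.ext
    apply Equiv.ext
    intro a
    simp only [Equiv.ofBijective_apply]
    by_cases ha : a ∈ t
    · rw [dif_pos ha]; exact (hπ a ha).symm
    · rw [dif_neg ha]
  · -- right inverse
    intro e
    apply Equiv.ext
    rintro ⟨a, ha⟩
    apply Subtype.ext
    simp only [Equiv.ofBijective_apply]
    rw [dif_neg (by simpa using ha)]

lemma card_perm_extend (t : Finset (Fin n)) (f : Fin n → Fin n) (hf : Set.InjOn f t) :
    (Finset.univ.filter (fun π : Equiv.Perm (Fin n) => ∀ a ∈ t, π a = f a)).card
      = (n - t.card).factorial := by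
  classical
  have h1 : (Finset.univ.filter (fun π : Equiv.Perm (Fin n) => ∀ a ∈ t, π a = f a)).card
      = Fintype.card {π : Equiv.Perm (Fin n) // ∀ a ∈ t, π a = f a} :=
    (Fintype.card_subtype _).symm
  rw [h1, Fintype.card_congr (permExtendEquiv t f hf)]
  have hcards : Fintype.card ↥(tᶜ) = Fintype.card ↥((t.image f)ᶜ) := by
    simp only [Fintype.card_coe, Finset.card_compl, Fintype.card_fin,
      Finset.card_image_of_injOn hf]
  rw [Fintype.card_equiv (Fintype.equivOfCardEq hcards)]
  simp [Finset.card_compl]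

lemma isCopy_iff (σ : Equiv.Perm (Fin k)) (π : Equiv.Perm (Fin n)) (s : Finset (Fin n))
    (h : s.card = k) (h' : (s.image π).card = k) :
    IsCopy σ π s ↔
      ∀ i : Fin k, π (s.orderEmbOfFin h i) = (s.image π).orderEmbOfFin h' (σ i) := by
  constructor
  · rintro ⟨h0, hP⟩
    have hP' : ∀ i j : Fin k,
        π (s.orderEmbOfFin h i) < π (s.orderEmbOfFin h j) ↔ σ i < σ j := hP
    have hg : (fun i : Fin k => π (s.orderEmbOfFin h (σ.symm i)))
        = (s.image π).orderEmbOfFin h' := by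
      apply Finset.orderEmbOfFin_unique h'
      · intro i
        exact Finset.mem_image_of_mem π (s.orderEmbOfFin_mem h _)
      · intro i j hij
        rw [hP']
        simpa using hij
    intro i
    have := congrFun hg (σ i)
    simpa using this
  · intro hP
    refine ⟨h, fun i j => ?_⟩
    show π (s.orderEmbOfFin h i) < π (s.orderEmbOfFin h j) ↔ σ i < σ j
    rw [hP i, hP j]
    exact ((s.image π).orderEmbOfFin h').lt_iff_lt

noncomputable def modelF (σ : Equiv.Perm (Fin k)) (s V : Finset (Fin n))
    (h : s.card = k) (hV : V.card = k) : Fin n → Fin n :=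
  fun a => if ha : a ∈ s then V.orderEmbOfFin hV (σ ((s.orderIsoOfFin h).symm ⟨a, ha⟩)) else a

lemma modelF_apply_emb (σ : Equiv.Perm (Fin k)) (s V : Finset (Fin n))
    (h : s.card = k) (hV : V.card = k) (i : Fin k) :
    modelF σ s V h hV (s.orderEmbOfFin h i) = V.orderEmbOfFin hV (σ i) := by
  rw [modelF, dif_pos (s.orderEmbOfFin_mem h i)]
  congr 2
  have : (⟨s.orderEmbOfFin h i, s.orderEmbOfFin_mem h i⟩ : {a // a ∈ s})
      = s.orderIsoOfFin h i := Subtype.ext rfl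
  rw [this, OrderIso.symm_apply_apply]

lemma modelF_mem (σ : Equiv.Perm (Fin k)) (s V : Finset (Fin n))
    (h : s.card = k) (hV : V.card = k) {a : Fin n} (ha : a ∈ s) :
    modelF σ s V h hV a ∈ V := by
  rw [modelF, dif_pos ha]
  exact V.orderEmbOfFin_mem hV _

lemma modelF_injOn (σ : Equiv.Perm (Fin k)) (s V : Finset (Fin n))
    (h : s.card = k) (hV : V.card = k) :
    Set.InjOn (modelF σ s V h hV) s := by
  intro a ha b hb hab
  rw [Finset.mem_coe] at ha hb
  simp only [modelF, dif_pos ha, dif_pos hb] at hab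
  have h1 := (V.orderEmbOfFin hV).injective hab
  have h2 := σ.injective h1
  have h3 := (s.orderIsoOfFin h).symm.injective h2
  exact congrArg Subtype.val h3

lemma cond_iff_model (σ : Equiv.Perm (Fin k)) (π : Equiv.Perm (Fin n)) (s V : Finset (Fin n))
    (h : s.card = k) (hV : V.card = k) :
    (∀ i : Fin k, π (s.orderEmbOfFin h i) = V.orderEmbOfFin hV (σ i)) ↔
      ∀ a ∈ s, π a = modelF σ s V h hV a := by
  constructor
  · intro hP a ha
    obtain ⟨i, rfl⟩ := (mem_iff_exists_orderEmb s h a).1 ha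
    rw [modelF_apply_emb]; exact hP i
  · intro hP i
    rw [hP _ (s.orderEmbOfFin_mem h i), modelF_apply_emb]

lemma image_eq_of_model (σ : Equiv.Perm (Fin k)) (π : Equiv.Perm (Fin n)) (s V : Finset (Fin n))
    (h : s.card = k) (hV : V.card = k)
    (hP : ∀ i : Fin k, π (s.orderEmbOfFin h i) = V.orderEmbOfFin hV (σ i)) :
    s.image π = V := by
  ext b
  rw [Finset.mem_image]
  constructor
  · rintro ⟨a, ha, rfl⟩
    obtain ⟨i, rfl⟩ := (mem_iff_exists_orderEmb s h a).1 ha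
    rw [hP i]
    exact V.orderEmbOfFin_mem hV _
  · intro hb
    obtain ⟨j, rfl⟩ := (mem_iff_exists_orderEmb V hV b).1 hb
    exact ⟨s.orderEmbOfFin h (σ.symm j), s.orderEmbOfFin_mem h _, by rw [hP]; simp⟩

lemma copy_cond_iff (σ : Equiv.Perm (Fin k)) (π : Equiv.Perm (Fin n)) (s V : Finset (Fin n))
    (h : s.card = k) (hV : V.card = k) :
    (IsCopy σ π s ∧ s.image π = V) ↔
      ∀ i : Fin k, π (s.orderEmbOfFin h i) = V.orderEmbOfFin hV (σ i) := by
  constructor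
  · rintro ⟨hc, rfl⟩
    exact (isCopy_iff σ π s h hV).1 hc
  · intro hP
    have himg := image_eq_of_model σ π s V h hV hP
    exact ⟨(isCopy_iff σ π s h (himg ▸ hV)).2 (by convert hP), himg⟩
end Aux

section Counts
variable {n k : ℕ}

lemma count_split (σ : Equiv.Perm (Fin k)) (s : Finset (Fin n)) (h : s.card = k) (x y : Fin n) :
    (Finset.univ.filter (fun π : Equiv.Perm (Fin n) => IsCopy σ π s ∧ π x = y)).card
      = ∑ V ∈ Finset.powersetCard k (Finset.univ : Finset (Fin n)),
          (Finset.univ.filter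
            (fun π : Equiv.Perm (Fin n) => (IsCopy σ π s ∧ s.image π = V) ∧ π x = y)).card := by
  classical
  rw [← Finset.card_biUnion]
  · congr 1
    ext π
    simp only [Finset.mem_biUnion, Finset.mem_filter, Finset.mem_univ, true_and,
      Finset.mem_powersetCard]
    constructor
    · rintro ⟨hc, hxy⟩
      exact ⟨s.image π, ⟨Finset.subset_univ _,
        by rw [Finset.card_image_of_injective _ π.injective, h]⟩, ⟨hc, rfl⟩, hxy⟩
    · rintro ⟨V, -, ⟨hc, -⟩, hxy⟩
      exact ⟨hc, hxy⟩
  · intro V _ W _ hVW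
    simp only [Finset.disjoint_left, Finset.mem_filter]
    rintro π ⟨-, ⟨-, h1⟩, -⟩ ⟨-, ⟨-, h2⟩, -⟩
    exact hVW (h1 ▸ h2)

lemma count_notmem (σ : Equiv.Perm (Fin k)) (s : Finset (Fin n)) (h : s.card = k)
    (x y : Fin n) (hx : x ∉ s) :
    (Finset.univ.filter (fun π : Equiv.Perm (Fin n) => IsCopy σ π s ∧ π x = y)).card
      = (n - 1).choose k * (n - (k + 1)).factorial := by
  classical
  rw [count_split σ s h x y]
  have hinner : ∀ V ∈ Finset.powersetCard k (Finset.univ : Finset (Fin n)),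
      (Finset.univ.filter
        (fun π : Equiv.Perm (Fin n) => (IsCopy σ π s ∧ s.image π = V) ∧ π x = y)).card
      = if y ∉ V then (n - (k + 1)).factorial else 0 := by
    intro V hVmem
    have hV : V.card = k := (Finset.mem_powersetCard.1 hVmem).2
    by_cases hyV : y ∈ V
    · rw [if_neg (by simpa using hyV)]
      rw [Finset.card_eq_zero, Finset.filter_eq_empty_iff]
      rintro π - ⟨hcond, hxy⟩
      have hP := (copy_cond_iff σ π s V h hV).1 hcond
      obtain ⟨j, hj⟩ := (mem_iff_exists_orderEmb V hV y).1 hyV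
      have : π (s.orderEmbOfFin h (σ.symm j)) = y := by rw [hP]; simpa using hj
      have hxs : s.orderEmbOfFin h (σ.symm j) = x := π.injective (this.trans hxy.symm)
      exact hx (hxs ▸ s.orderEmbOfFin_mem h _)
    · rw [if_pos (by simpa using hyV)]
      set F : Fin n → Fin n := fun a => if a = x then y else modelF σ s V h hV a with hF
      have hcond : ∀ π : Equiv.Perm (Fin n),
          ((IsCopy σ π s ∧ s.image π = V) ∧ π x = y) ↔ ∀ a ∈ insert x s, π a = F a := by
        intro π
        rw [copy_cond_iff σ π s V h hV, cond_iff_model σ π s V h hV]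
        constructor
        · rintro ⟨hs, hxy⟩ a ha
          rcases Finset.mem_insert.1 ha with rfl | ha
          · rw [hF]; simpa using hxy
          · have hax : a ≠ x := fun hax => hx (hax ▸ ha)
            rw [hF]; simp only [if_neg hax]; exact hs a ha
        · intro hall
          constructor
          · intro a ha
            have hax : a ≠ x := fun hax => hx (hax ▸ ha)
            have := hall a (Finset.mem_insert_of_mem ha)
            simpa [hF, hax] using this
          · have := hall x (Finset.mem_insert_self x s)
            simpa [hF] using this
      have hinj : Set.InjOn F (insert x s : Finset (Fin n)) := by
        intro a ha b hb hab
        rw [Finset.mem_coe, Finset.mem_insert] at ha hb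
        rcases ha with rfl | ha <;> rcases hb with rfl | hb
        · rfl
        · exfalso
          have hbx : b ≠ a := fun hh => hx (hh ▸ hb)
          simp only [hF, if_pos rfl, if_neg hbx, if_true, eq_self_iff_true] at hab
          exact hyV (hab ▸ modelF_mem σ s V h hV hb)
        · exfalso
          have hax : a ≠ b := fun hh => hx (hh ▸ ha)
          simp only [hF, if_pos rfl, if_neg hax, if_true, eq_self_iff_true] at hab
          exact hyV (hab.symm ▸ modelF_mem σ s V h hV ha)
        · have hax : a ≠ x := fun hh => hx (hh ▸ ha)
          have hbx : b ≠ x := fun hh => hx (hh ▸ hb)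
          simp only [hF, if_neg hax, if_neg hbx] at hab
          exact modelF_injOn σ s V h hV ha hb hab
      calc (Finset.univ.filter
            (fun π : Equiv.Perm (Fin n) => (IsCopy σ π s ∧ s.image π = V) ∧ π x = y)).card
          = (Finset.univ.filter
            (fun π : Equiv.Perm (Fin n) => ∀ a ∈ insert x s, π a = F a)).card := by
            congr 1; ext π; simp only [Finset.mem_filter, Finset.mem_univ, true_and]; exact hcond π
        _ = (n - (insert x s).card).factorial := card_perm_extend _ F hinj
        _ = (n - (k + 1)).factorial := by rw [Finset.card_insert_of_notMem hx, h]
  rw [Finset.sum_congr rfl hinner]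
  rw [← Finset.sum_filter]
  rw [Finset.sum_const, smul_eq_mul]
  congr 1
  have : (Finset.powersetCard k (Finset.univ : Finset (Fin n))).filter (fun V => y ∉ V)
      = Finset.powersetCard k ((Finset.univ : Finset (Fin n)).erase y) := by
    ext V
    simp only [Finset.mem_filter, Finset.mem_powersetCard, Finset.subset_univ, true_and,
      Finset.subset_erase]
    tauto
  rw [this, Finset.card_powersetCard, Finset.card_erase_of_mem (Finset.mem_univ y),
    Finset.card_univ, Fintype.card_fin]

lemma count_mem (σ : Equiv.Perm (Fin k)) (s : Finset (Fin n)) (h : s.card = k)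
    (x y : Fin n) (i0 : Fin k) (hi0 : s.orderEmbOfFin h i0 = x) :
    (Finset.univ.filter (fun π : Equiv.Perm (Fin n) => IsCopy σ π s ∧ π x = y)).card
      = (y.val.choose (σ i0).val * (n - 1 - y.val).choose (k - 1 - (σ i0).val))
          * (n - k).factorial := by
  classical
  rw [count_split σ s h x y]
  have hinner : ∀ V ∈ Finset.powersetCard k (Finset.univ : Finset (Fin n)),
      (Finset.univ.filter
        (fun π : Equiv.Perm (Fin n) => (IsCopy σ π s ∧ s.image π = V) ∧ π x = y)).card
      = if y ∈ V ∧ (V.filter (fun a => a < y)).card = (σ i0).val then (n - k).factorial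
        else 0 := by
    intro V hVmem
    have hV : V.card = k := (Finset.mem_powersetCard.1 hVmem).2
    have hkey : ∀ π : Equiv.Perm (Fin n),
        (∀ i : Fin k, π (s.orderEmbOfFin h i) = V.orderEmbOfFin hV (σ i)) →
          π x = V.orderEmbOfFin hV (σ i0) := by
      intro π hP
      rw [← hi0]; exact hP i0
    by_cases hcase : V.orderEmbOfFin hV (σ i0) = y
    · rw [if_pos ((orderEmb_eq_iff V hV y (σ i0)).1 hcase)]
      calc (Finset.univ.filter
            (fun π : Equiv.Perm (Fin n) => (IsCopy σ π s ∧ s.image π = V) ∧ π x = y)).card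
          = (Finset.univ.filter
            (fun π : Equiv.Perm (Fin n) => ∀ a ∈ s, π a = modelF σ s V h hV a)).card := by
            congr 1; ext π
            simp only [Finset.mem_filter, Finset.mem_univ, true_and]
            rw [copy_cond_iff σ π s V h hV]
            constructor
            · rintro ⟨hc, -⟩; exact (cond_iff_model σ π s V h hV).1 hc
            · intro hm
              have hc := (cond_iff_model σ π s V h hV).2 hm
              exact ⟨hc, (hkey π hc).trans hcase⟩
        _ = (n - s.card).factorial := card_perm_extend s _ (modelF_injOn σ s V h hV)
        _ = (n - k).factorial := by rw [h]
    · rw [if_neg (fun hc => hcase ((orderEmb_eq_iff V hV y (σ i0)).2 hc))]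
      rw [Finset.card_eq_zero, Finset.filter_eq_empty_iff]
      rintro π - ⟨hcond, hxy⟩
      have hP := (copy_cond_iff σ π s V h hV).1 hcond
      exact hcase ((hkey π hP).symm.trans hxy)
  rw [Finset.sum_congr rfl hinner, ← Finset.sum_filter, Finset.sum_const, smul_eq_mul]
  congr 1
  exact card_subsets_index y (σ i0).val (σ i0).isLt

end Counts

/-- `f^{↑n}_{k,j}(x) = C(x−1, j−1)·C(n−x, k−j)`. -/
def fAux (n k j x : ℕ) : ℕ := Nat.choose (x - 1) (j - 1) * Nat.choose (n - x) (k - j)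

/-- The `(x,y)` entry (1-indexed) of the `n×n` fuzzy permutation matrix `F_σ^{↑n}`. -/
noncomputable def fuzzy {k : ℕ} (σ : Equiv.Perm (Fin k)) (n : ℕ) (x y : ℕ) : ℝ :=
  ((n - k).factorial : ℝ) / (n.choose k : ℝ) *
    ∑ j : Fin k, (fAux n k (j.val + 1) x : ℝ) * (fAux n k ((σ j).val + 1) y : ℝ)

/-- The `(x,y)` entry of the `n×n` cover matrix `A_σ^{↑n} = Σ_π d(σ,π)·A_π`. -/
noncomputable def coverEntry {k : ℕ} (σ : Equiv.Perm (Fin k)) (n : ℕ) (x y : Fin n) : ℝ :=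
  ∑ π : Equiv.Perm (Fin n), density σ π * (if π x = y then 1 else 0)

section Assemble
variable {n k : ℕ}

lemma fAux_eq (n k j : ℕ) (z : Fin n) :
    fAux n k (j + 1) (z.val + 1) = z.val.choose j * (n - 1 - z.val).choose (k - 1 - j) := by
  have h1 : z.val + 1 - 1 = z.val := by omega
  have h2 : n - (z.val + 1) = n - 1 - z.val := by omega
  have h3 : k - (j + 1) = k - 1 - j := by omega
  have h4 : j + 1 - 1 = j := by omega
  rw [fAux, h1, h2, h3, h4]

lemma card_pc_notmem (x : Fin n) :
    ((Finset.powersetCard k (Finset.univ : Finset (Fin n))).filter (fun s => x ∉ s)).card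
      = (n - 1).choose k := by
  have : (Finset.powersetCard k (Finset.univ : Finset (Fin n))).filter (fun s => x ∉ s)
      = Finset.powersetCard k ((Finset.univ : Finset (Fin n)).erase x) := by
    ext V
    simp only [Finset.mem_filter, Finset.mem_powersetCard, Finset.subset_univ, true_and,
      Finset.subset_erase]
    tauto
  rw [this, Finset.card_powersetCard, Finset.card_erase_of_mem (Finset.mem_univ x),
    Finset.card_univ, Fintype.card_fin]

lemma key_nat (σ : Equiv.Perm (Fin k)) (hk : 1 ≤ k) (x y : Fin n) :
    ∑ π : Equiv.Perm (Fin n), (if π x = y then numCopies σ π else 0)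
      = (n - 1).choose k * ((n - 1).choose k * (n - (k + 1)).factorial)
        + (∑ i : Fin k, fAux n k (i.val + 1) (x.val + 1) * fAux n k ((σ i).val + 1) (y.val + 1))
            * (n - k).factorial := by
  classical
  -- step 1: rewrite each summand as a count over subsets
  have step1 : ∀ π : Equiv.Perm (Fin n),
      (if π x = y then numCopies σ π else 0)
        = (Finset.univ.filter (fun s : Finset (Fin n) => IsCopy σ π s ∧ π x = y)).card := by
    intro π
    by_cases hπ : π x = y
    · rw [if_pos hπ, numCopies]
      congr 1
      ext s
      simp [hπ]
    · rw [if_neg hπ]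
      symm
      rw [Finset.card_eq_zero, Finset.filter_eq_empty_iff]
      rintro s - ⟨-, hxy⟩
      exact hπ hxy
  rw [Finset.sum_congr rfl (fun π _ => step1 π)]
  -- step 2: swap sums
  have step2 : ∑ π : Equiv.Perm (Fin n),
      (Finset.univ.filter (fun s : Finset (Fin n) => IsCopy σ π s ∧ π x = y)).card
      = ∑ s : Finset (Fin n),
          (Finset.univ.filter (fun π : Equiv.Perm (Fin n) => IsCopy σ π s ∧ π x = y)).card := by
    simp only [Finset.card_filter]
    exact Finset.sum_comm
  rw [step2]
  -- step 3: restrict to subsets of size k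
  have step3 : ∑ s : Finset (Fin n),
      (Finset.univ.filter (fun π : Equiv.Perm (Fin n) => IsCopy σ π s ∧ π x = y)).card
      = ∑ s ∈ Finset.powersetCard k (Finset.univ : Finset (Fin n)),
          (Finset.univ.filter (fun π : Equiv.Perm (Fin n) => IsCopy σ π s ∧ π x = y)).card := by
    symm
    apply Finset.sum_subset (Finset.subset_univ _)
    intro s _ hs
    rw [Finset.card_eq_zero, Finset.filter_eq_empty_iff]
    rintro π - ⟨⟨hcard, -⟩, -⟩
    exact hs (Finset.mem_powersetCard.2 ⟨Finset.subset_univ _, hcard⟩)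
  rw [step3]
  -- step 4: split according to x ∈ s
  rw [← Finset.sum_filter_add_sum_filter_not _ (fun s => x ∉ s)]
  congr 1
  · -- x ∉ s part
    have hterm : ∀ s ∈ (Finset.powersetCard k (Finset.univ : Finset (Fin n))).filter
        (fun s => x ∉ s),
        (Finset.univ.filter (fun π : Equiv.Perm (Fin n) => IsCopy σ π s ∧ π x = y)).card
          = (n - 1).choose k * (n - (k + 1)).factorial := by
      intro s hs
      obtain ⟨hs1, hs2⟩ := Finset.mem_filter.1 hs
      exact count_notmem σ s (Finset.mem_powersetCard.1 hs1).2 x y hs2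
    rw [Finset.sum_congr rfl hterm, Finset.sum_const, smul_eq_mul, card_pc_notmem]
  · -- x ∈ s part
    have hterm : ∀ s ∈ (Finset.powersetCard k (Finset.univ : Finset (Fin n))).filter
        (fun s => ¬ x ∉ s),
        (Finset.univ.filter (fun π : Equiv.Perm (Fin n) => IsCopy σ π s ∧ π x = y)).card
          = ∑ i : Fin k, (if (s.filter (fun a => a < x)).card = i.val then
              (y.val.choose (σ i).val * (n - 1 - y.val).choose (k - 1 - (σ i).val))
                * (n - k).factorial else 0) := by
      intro s hs
      obtain ⟨hs1, hs2⟩ := Finset.mem_filter.1 hs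
      rw [not_not] at hs2
      have h : s.card = k := (Finset.mem_powersetCard.1 hs1).2
      have hlt : (s.filter (fun a => a < x)).card < k := by
        have hsub : s.filter (fun a => a < x) ⊆ s.erase x := by
          intro a ha
          obtain ⟨has, hax⟩ := Finset.mem_filter.1 ha
          exact Finset.mem_erase.2 ⟨ne_of_lt hax, has⟩
        have := Finset.card_le_card hsub
        rw [Finset.card_erase_of_mem hs2, h] at this
        omega
      set i0 : Fin k := ⟨(s.filter (fun a => a < x)).card, hlt⟩ with hi0def
      have hi0 : s.orderEmbOfFin h i0 = x := (orderEmb_eq_iff s h x i0).2 ⟨hs2, rfl⟩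
      rw [count_mem σ s h x y i0 hi0]
      rw [Finset.sum_eq_single i0]
      · rw [if_pos rfl]
      · intro i _ hne
        rw [if_neg]
        intro hc
        exact hne (Fin.ext hc.symm)
      · intro habs
        exact absurd (Finset.mem_univ i0) habs
    rw [Finset.sum_congr rfl hterm, Finset.sum_comm]
    rw [Finset.sum_mul]
    apply Finset.sum_congr rfl
    intro i _
    rw [← Finset.sum_filter, Finset.sum_const, smul_eq_mul, Finset.filter_filter]
    have hset : ((Finset.powersetCard k (Finset.univ : Finset (Fin n))).filter
        (fun s => (¬ x ∉ s) ∧ (s.filter (fun a => a < x)).card = i.val))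
        = (Finset.powersetCard k (Finset.univ : Finset (Fin n))).filter
            (fun s => x ∈ s ∧ (s.filter (fun a => a < x)).card = i.val) := by
      apply Finset.filter_congr
      intro s _
      rw [not_not]
    rw [hset, card_subsets_index x i.val i.isLt, fAux_eq, fAux_eq]
    ring

end Assemble

theorem stmt_10 (k n : ℕ) (hk : 1 ≤ k) (hkn : k ≤ n) (σ : Equiv.Perm (Fin k)) :
    ∀ x y : Fin n, coverEntry σ n x y =
      ((n - 1).factorial : ℝ) / ((k - 1).factorial : ℝ) * (1 / (k : ℝ) - 1 / (n : ℝ)) +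
        fuzzy σ n (x.val + 1) (y.val + 1) := by
  intro x y
  classical
  have hn : 1 ≤ n := le_trans hk hkn
  have hCpos : 0 < n.choose k := Nat.choose_pos hkn
  have hC : (n.choose k : ℝ) ≠ 0 := Nat.cast_ne_zero.2 hCpos.ne'
  have hcast : coverEntry σ n x y
      = ((∑ π : Equiv.Perm (Fin n), if π x = y then numCopies σ π else 0 : ℕ) : ℝ)
          / (n.choose k : ℝ) := by
    rw [coverEntry]
    push_cast
    rw [Finset.sum_div]
    apply Finset.sum_congr rfl
    intro π _
    rw [density]
    by_cases hπ : π x = y <;> simp [hπ, div_mul_eq_mul_div]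
  rw [hcast, key_nat σ hk x y]
  set A : ℕ := (n - 1).choose k * ((n - 1).choose k * (n - (k + 1)).factorial) with hA
  set S : ℕ := ∑ i : Fin k, fAux n k (i.val + 1) (x.val + 1) * fAux n k ((σ i).val + 1) (y.val + 1)
    with hS
  have hnat : A * (k.factorial * n) = (n - 1).factorial * ((n - k) * n.choose k) := by
    rcases eq_or_lt_of_le hkn with rfl | hlt
    · have h0 : (k - 1).choose k = 0 := Nat.choose_eq_zero_of_lt (by omega)
      simp [hA, h0]
    · have hk1 : k ≤ n - 1 := by omega
      have h1 : (n - 1).choose k * k.factorial * (n - 1 - k).factorial = (n - 1).factorial :=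
        Nat.choose_mul_factorial_mul_factorial hk1
      have h2 : (n - 1).choose k * n = n.choose k * (n - k) := by
        have := Nat.choose_mul_succ_eq (n - 1) k
        rwa [Nat.sub_add_cancel hn] at this
      have h3 : n - (k + 1) = n - 1 - k := by omega
      rw [hA, h3]
      calc (n - 1).choose k * ((n - 1).choose k * (n - 1 - k).factorial) * (k.factorial * n)
          = ((n - 1).choose k * n) * ((n - 1).choose k * k.factorial * (n - 1 - k).factorial) := by
            ring
        _ = (n.choose k * (n - k)) * (n - 1).factorial := by rw [h1, h2]
        _ = (n - 1).factorial * ((n - k) * n.choose k) := by ring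
  have hconst : ((A : ℕ) : ℝ) / (n.choose k : ℝ)
      = ((n - 1).factorial : ℝ) / ((k - 1).factorial : ℝ) * (1 / (k : ℝ) - 1 / (n : ℝ)) := by
    have hkR : (k : ℝ) ≠ 0 := Nat.cast_ne_zero.2 (by omega)
    have hnR : (n : ℝ) ≠ 0 := Nat.cast_ne_zero.2 (by omega)
    have hfR : ((k - 1).factorial : ℝ) ≠ 0 := Nat.cast_ne_zero.2 (Nat.factorial_ne_zero _)
    have hsub : (1 / (k : ℝ) - 1 / (n : ℝ)) = ((n - k : ℕ) : ℝ) / ((k : ℝ) * n) := by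
      rw [Nat.cast_sub hkn]
      field_simp
    rw [hsub, div_mul_div_comm, div_eq_div_iff hC (by positivity)]
    have hkf : ((k - 1).factorial : ℝ) * (k : ℝ) = (k.factorial : ℝ) := by
      have h := Nat.mul_factorial_pred (show k ≠ 0 by omega)
      exact_mod_cast (by rw [mul_comm]; exact h : (k - 1).factorial * k = k.factorial)
    have hcast2 := congrArg (Nat.cast : ℕ → ℝ) hnat
    push_cast at hcast2
    linear_combination hcast2 + (A : ℝ) * (n : ℝ) * hkf
  have hsplit : ((A + S * (n - k).factorial : ℕ) : ℝ)
      = (A : ℝ) + (S : ℝ) * ((n - k).factorial : ℝ) := by push_cast; ring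
  rw [hsplit, add_div, hconst, fuzzy]
  congr 1
  rw [hS]
  push_cast
  ring
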